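/- Let 1 ≤ d < n and let Δ be a strong f-simplicial complex on [n] that is pure (d−1)-dimensional with facet set a nonempty proper subset of [n]_d. Then the Alexander dual of Δ equals the homogeneous complement of its Newton complement dual: Δ^∨ = (Δ^c)'. -/

import Mathlib

open Finset

/-- `Δ`, given as the finset of its faces, is a simplicial complex on the vertex
set `Fin n`: a nonempty collection of subsets closed under taking subsets. -/
def IsComplex {n : ℕ} (Δ : Finset (Finset (Fin n))) : Prop :=
  Δ.Nonempty ∧ ∀ A ∈ Δ, ∀ B ⊆ A, B ∈ Δ

/-- The facets (maximal faces) of `Δ`. -/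
def facets {n : ℕ} (Δ : Finset (Finset (Fin n))) : Finset (Finset (Fin n)) :=
  Δ.filter fun F => ∀ G ∈ Δ, F ⊆ G → F = G

/-- The simplicial complex generated by a family `𝔉`: all subsets of members of `𝔉`. -/
def generated {n : ℕ} (𝔉 : Finset (Finset (Fin n))) : Finset (Finset (Fin n)) :=
  univ.filter fun A => ∃ F ∈ 𝔉, A ⊆ F

/-- The Newton complement dual `Δ^c`: the complex generated by the complements
of the facets of `Δ`. -/
def cdual {n : ℕ} (Δ : Finset (Finset (Fin n))) : Finset (Finset (Fin n)) :=
  generated ((facets Δ).image fun F => Fᶜ)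

/-- The nonface complex of `Δ`: all subsets of `[n]` containing no facet of `Δ`. -/
def nonfaceComplex {n : ℕ} (Δ : Finset (Finset (Fin n))) : Finset (Finset (Fin n)) :=
  univ.filter fun A => ∀ F ∈ facets Δ, ¬ F ⊆ A

/-- `Δ` is an `f`-simplicial complex: for every `k`, `Δ` and its nonface complex
have the same number of `k`-element members (the same `f`-vector). -/
def IsFComplex {n : ℕ} (Δ : Finset (Finset (Fin n))) : Prop :=
  ∀ k : ℕ, (Δ.filter fun A => A.card = k).card =
    ((nonfaceComplex Δ).filter fun A => A.card = k).card

/-- `Δ` is pure `(d-1)`-dimensional: every facet has exactly `d` elements. -/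
def PureDim {n : ℕ} (d : ℕ) (Δ : Finset (Finset (Fin n))) : Prop :=
  ∀ F ∈ facets Δ, F.card = d

/-- The minimal nonfaces of `Δ`: sets that are not faces but all of whose proper
subsets are faces. -/
def minNonfaces {n : ℕ} (Δ : Finset (Finset (Fin n))) : Finset (Finset (Fin n)) :=
  univ.filter fun A => A ∉ Δ ∧ ∀ B ⊂ A, B ∈ Δ

/-- The Alexander dual `Δ^∨`: the complex whose facets are the complements of the
minimal nonfaces of `Δ`. -/
def adual {n : ℕ} (Δ : Finset (Finset (Fin n))) : Finset (Finset (Fin n)) :=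
  generated ((minNonfaces Δ).image fun F => Fᶜ)

/-- The homogeneous complement `Δ'` (in degree `e`): the complex generated by the
`e`-element subsets of `[n]` that are not facets of `Δ`. -/
def hcompl {n : ℕ} (e : ℕ) (Δ : Finset (Finset (Fin n))) : Finset (Finset (Fin n)) :=
  generated (univ.filter fun A : Finset (Fin n) => A.card = e ∧ A ∉ facets Δ)

section Aux
variable {n : ℕ}

lemma mem_generated {𝔉 : Finset (Finset (Fin n))} {A : Finset (Fin n)} :
    A ∈ generated 𝔉 ↔ ∃ F ∈ 𝔉, A ⊆ F := by
  simp [generated]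

lemma facets_subset {Δ : Finset (Finset (Fin n))} : facets Δ ⊆ Δ := by
  intro F hF; exact (mem_filter.mp hF).1

/-- every face is contained in a facet -/
lemma exists_facet {Δ : Finset (Finset (Fin n))} (hΔ : IsComplex Δ)
    {A : Finset (Fin n)} (hA : A ∈ Δ) : ∃ F ∈ facets Δ, A ⊆ F := by
  have hne : (Δ.filter fun B => A ⊆ B).Nonempty := ⟨A, mem_filter.mpr ⟨hA, subset_rfl⟩⟩
  obtain ⟨F, hF, hmax⟩ : ∃ F ∈ Δ.filter (fun B => A ⊆ B), ∀ x ∈ Δ.filter (fun B => A ⊆ B), ¬ F < x := by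
    obtain ⟨F, hF⟩ := Finset.exists_maximal hne
    exact ⟨F, hF.prop, fun x hx hlt => lt_irrefl F (lt_of_lt_of_le hlt (hF.2 hx hlt.le))⟩
  rw [mem_filter] at hF
  refine ⟨F, mem_filter.mpr ⟨hF.1, ?_⟩, hF.2⟩
  intro G hG hFG
  by_contra hne'
  exact hmax G (mem_filter.mpr ⟨hG, hF.2.trans hFG⟩) (lt_of_le_of_ne hFG hne')

/-- facets of a complex generated by a family are members of the family -/
lemma facets_generated_subset {𝔉 : Finset (Finset (Fin n))} :
    facets (generated 𝔉) ⊆ 𝔉 := by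
  intro G hG
  rw [facets, mem_filter] at hG
  obtain ⟨hG1, hG2⟩ := hG
  obtain ⟨F, hF, hGF⟩ := mem_generated.mp hG1
  have : G = F := hG2 F (mem_generated.mpr ⟨F, hF, subset_rfl⟩) hGF
  rwa [this]

/-- if every member of the family has the same cardinality, the facets are exactly
the family members -/
lemma facets_generated_eq {𝔉 : Finset (Finset (Fin n))} {e : ℕ}
    (hcard : ∀ F ∈ 𝔉, F.card = e) : facets (generated 𝔉) = 𝔉 := by
  apply Finset.Subset.antisymm facets_generated_subset
  intro F hF
  rw [facets, mem_filter]
  refine ⟨mem_generated.mpr ⟨F, hF, subset_rfl⟩, ?_⟩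
  intro G hG hFG
  obtain ⟨F', hF', hGF'⟩ := mem_generated.mp hG
  have h1 : F ⊆ F' := hFG.trans hGF'
  have h2 : F = F' := Finset.eq_of_subset_of_card_le h1
    (by rw [hcard F hF, hcard F' hF'])
  exact Finset.Subset.antisymm hFG (by rw [h2]; exact hGF')

/-- an f-complex that is pure of dimension d-1 contains the full (d-1)-skeleton -/
lemma skeleton_mem {d : ℕ} {Δ : Finset (Finset (Fin n))}
    (hf : IsFComplex Δ) (hpure : PureDim d Δ)
    {A : Finset (Fin n)} (hA : A.card < d) : A ∈ Δ := by
  set k := A.card with hk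
  have hnf : (nonfaceComplex Δ).filter (fun B => B.card = k) =
      univ.filter (fun B => B.card = k) := by
    apply Finset.Subset.antisymm
    · intro B hB; rw [mem_filter] at hB; exact mem_filter.mpr ⟨mem_univ _, hB.2⟩
    · intro B hB
      rw [mem_filter] at hB ⊢
      refine ⟨mem_filter.mpr ⟨mem_univ _, ?_⟩, hB.2⟩
      intro F hF hFB
      have := Finset.card_le_card hFB
      rw [hpure F hF, hB.2] at this
      omega
  have hcard := hf k
  rw [hnf] at hcard
  have hsub : Δ.filter (fun B => B.card = k) ⊆ univ.filter (fun B => B.card = k) := by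
    intro B hB; exact mem_filter.mpr ⟨mem_univ _, (mem_filter.mp hB).2⟩
  have heq := Finset.eq_of_subset_of_card_le hsub (le_of_eq hcard.symm)
  have : A ∈ Δ.filter (fun B => B.card = k) := by
    rw [heq]; exact mem_filter.mpr ⟨mem_univ _, rfl⟩
  exact (mem_filter.mp this).1

/-- existence of a minimal nonface inside any nonface -/
lemma exists_minNonface {Δ : Finset (Finset (Fin n))} {T : Finset (Fin n)}
    (hT : T ∉ Δ) : ∃ M ∈ minNonfaces Δ, M ⊆ T := by
  classical
  induction T using Finset.strongInduction with
  | _ T ih =>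
    by_cases h : ∀ B ⊂ T, B ∈ Δ
    · exact ⟨T, mem_filter.mpr ⟨mem_univ _, hT, h⟩, subset_rfl⟩
    · push_neg at h
      obtain ⟨B, hBT, hB⟩ := h
      obtain ⟨M, hM, hMB⟩ := ih B hBT hB
      exact ⟨M, hM, hMB.trans hBT.subset⟩

end Aux

/-- for a strong `f`-simplicial complex `Δ` on `[n]`, pure `(d-1)`-dimensional,
with facet set a nonempty proper subfamily of the `d`-element subsets, the Alexander dual
`Δ^∨` equals the homogeneous complement (in degree `n - d`) of the Newton complement
dual `Δ^c`. -/
theorem stmt8 {n d : ℕ} (hd : 1 ≤ d) (hdn : d < n)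
    (Δ : Finset (Finset (Fin n))) (hΔ : IsComplex Δ) (hpure : PureDim d Δ)
    (hne : (facets Δ).Nonempty)
    (hproper : ∃ A : Finset (Fin n), A.card = d ∧ A ∉ facets Δ)
    (hstrong : IsFComplex Δ ∧ IsFComplex (hcompl d Δ)) :
    adual Δ = hcompl (n - d) (cdual Δ) := by
  classical
  obtain ⟨hf, hf'⟩ := hstrong
  have hfin : Fintype.card (Fin n) = n := Fintype.card_fin n
  -- facets of hcompl d Δ are contained in the generating family
  have hfacS : facets (hcompl d Δ) ⊆
      univ.filter (fun A : Finset (Fin n) => A.card = d ∧ A ∉ facets Δ) :=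
    facets_generated_subset
  -- key step from the f-condition on hcompl d Δ:
  -- every (d+1)-set contains a d-set that is not a facet of Δ
  have hd1 : ∀ T : Finset (Fin n), T.card = d + 1 →
      ∃ G ⊆ T, G.card = d ∧ G ∉ facets Δ := by
    intro T hT
    -- hcompl d Δ has no faces of card d+1
    have hempty : ((hcompl d Δ).filter fun A => A.card = d + 1) = ∅ := by
      rw [Finset.eq_empty_iff_forall_notMem]
      intro A hA
      rw [mem_filter] at hA
      obtain ⟨hA1, hA2⟩ := hA
      obtain ⟨F, hF, hAF⟩ := mem_generated.mp hA1
      rw [mem_filter] at hF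
      have := Finset.card_le_card hAF
      omega
    have hcard := (hf' (d + 1)).symm
    rw [hempty, Finset.card_empty] at hcard
    have hTnot : T ∉ (nonfaceComplex (hcompl d Δ)).filter fun A => A.card = d + 1 := by
      intro hmem
      have := Finset.card_pos.mpr ⟨T, hmem⟩
      omega
    have h2 : ∃ G ∈ facets (hcompl d Δ), G ⊆ T := by
      by_contra hc
      push_neg at hc
      exact hTnot (mem_filter.mpr
        ⟨mem_filter.mpr ⟨mem_univ _, fun G hG => hc G hG⟩, hT⟩)
    obtain ⟨G, hG, hGT⟩ := h2
    have hGS := hfacS hG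
    rw [mem_filter] at hGS
    exact ⟨G, hGT, hGS.2.1, hGS.2.2⟩
  -- KEY LEMMA: T ∉ Δ ↔ T contains a d-set that is not a facet
  have key : ∀ T : Finset (Fin n), T ∉ Δ ↔ ∃ A ⊆ T, A.card = d ∧ A ∉ facets Δ := by
    intro T
    constructor
    · intro hT
      rcases lt_trichotomy T.card d with h | h | h
      · exact absurd (skeleton_mem hf hpure h) hT
      · exact ⟨T, subset_rfl, h, fun hF => hT (facets_subset hF)⟩
      · obtain ⟨T', hT'sub, hT'card⟩ := Finset.exists_subset_card_eq (show d + 1 ≤ T.card by omega)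
        obtain ⟨G, hGT', hGcard, hGfac⟩ := hd1 T' hT'card
        exact ⟨G, hGT'.trans hT'sub, hGcard, hGfac⟩
    · rintro ⟨A, hAT, hAcard, hAfac⟩ hT
      have hA : A ∈ Δ := hΔ.2 T hT A hAT
      obtain ⟨F, hF, hAF⟩ := exists_facet hΔ hA
      have : A = F := Finset.eq_of_subset_of_card_le hAF
        (by rw [hpure F hF, hAcard])
      exact hAfac (this ▸ hF)
  -- membership in adual
  have hadual : ∀ S : Finset (Fin n), S ∈ adual Δ ↔ Sᶜ ∉ Δ := by
    intro S
    rw [adual, mem_generated]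
    constructor
    · rintro ⟨B, hB, hSB⟩
      rw [Finset.mem_image] at hB
      obtain ⟨M, hM, rfl⟩ := hB
      rw [minNonfaces, mem_filter] at hM
      intro hSc
      exact hM.2.1 (hΔ.2 Sᶜ hSc M (Finset.subset_compl_comm.mp hSB))
    · intro hSc
      obtain ⟨M, hM, hMS⟩ := exists_minNonface hSc
      exact ⟨Mᶜ, Finset.mem_image_of_mem _ hM, Finset.subset_compl_comm.mp hMS⟩
  -- facets of cdual Δ
  have hfaccd : facets (cdual Δ) = (facets Δ).image fun F => Fᶜ := by
    apply facets_generated_eq (e := n - d)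
    intro B hB
    rw [Finset.mem_image] at hB
    obtain ⟨F, hF, rfl⟩ := hB
    rw [Finset.card_compl, hfin, hpure F hF]
  -- membership in hcompl (n-d) (cdual Δ)
  have hrhs : ∀ S : Finset (Fin n), S ∈ hcompl (n - d) (cdual Δ) ↔
      ∃ A ⊆ Sᶜ, A.card = d ∧ A ∉ facets Δ := by
    intro S
    rw [hcompl, mem_generated]
    constructor
    · rintro ⟨B, hB, hSB⟩
      rw [mem_filter] at hB
      obtain ⟨-, hBcard, hBfac⟩ := hB
      refine ⟨Bᶜ, Finset.compl_subset_compl.mpr hSB, ?_, ?_⟩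
      · rw [Finset.card_compl, hfin, hBcard]; omega
      · intro hBc
        apply hBfac
        rw [hfaccd]
        exact Finset.mem_image.mpr ⟨Bᶜ, hBc, by rw [compl_compl]⟩
    · rintro ⟨A, hASc, hAcard, hAfac⟩
      refine ⟨Aᶜ, mem_filter.mpr ⟨mem_univ _, ?_, ?_⟩, Finset.subset_compl_comm.mpr hASc⟩
      · rw [Finset.card_compl, hfin, hAcard]
      · intro hAc
        rw [hfaccd, Finset.mem_image] at hAc
        obtain ⟨F, hF, hFA⟩ := hAc
        have : F = A := by
          have := congrArg (fun x => xᶜ) hFA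
          simpa using this
        exact hAfac (this ▸ hF)
  ext S
  rw [hadual, hrhs, key]
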